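/- Let u > 0. Define g(L) = (u+1)·ln(u+L) − ln(L) − (u+1)·ln(u+1) for L > 1. Then the second derivative g''(L) ≤ 0 if and only if L ≥ 1 + √(u+1). -/

import Mathlib

lemma stmt_2_d1 (u : ℝ) (hu : 0 < u) (x : ℝ) (hx : 0 < x) :
    HasDerivAt (fun x : ℝ => (u + 1) * Real.log (u + x) - Real.log x - (u + 1) * Real.log (u + 1))
      ((u + 1) / (u + x) - 1 / x) x := by
  have h1 : HasDerivAt (fun x : ℝ => u + x) 1 x := by
    simpa using (hasDerivAt_id x).const_add u
  have h2 := (h1.log (by positivity)).const_mul (u + 1)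
  have h3 := ((h2.sub (Real.hasDerivAt_log hx.ne')).sub_const ((u + 1) * Real.log (u + 1)))
  refine h3.congr_deriv ?_
  ring

lemma stmt_2_d2 (u : ℝ) (hu : 0 < u) (x : ℝ) (hx : 0 < x) :
    HasDerivAt (fun x : ℝ => (u + 1) / (u + x) - 1 / x)
      (1 / x ^ 2 - (u + 1) / (u + x) ^ 2) x := by
  have h1 : HasDerivAt (fun x : ℝ => u + x) 1 x := by
    simpa using (hasDerivAt_id x).const_add u
  have h2 := (hasDerivAt_const x (u + 1)).div h1 (by positivity : (0:ℝ) < u + x).ne'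
  have h3 := (hasDerivAt_const x (1:ℝ)).div (hasDerivAt_id x) hx.ne'
  refine (h2.sub h3).congr_deriv ?_
  simp only [id]
  ring

theorem stmt_2 (u : ℝ) (hu : 0 < u) (L : ℝ) (hL : 1 < L) :
    deriv (deriv (fun x : ℝ => (u + 1) * Real.log (u + x) - Real.log x - (u + 1) * Real.log (u + 1))) L ≤ 0
      ↔ L ≥ 1 + Real.sqrt (u + 1) := by
  have hL0 : (0:ℝ) < L := lt_trans one_pos hL
  have hev : deriv (fun x : ℝ => (u + 1) * Real.log (u + x) - Real.log x - (u + 1) * Real.log (u + 1))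
      =ᶠ[nhds L] fun x => (u + 1) / (u + x) - 1 / x := by
    filter_upwards [eventually_gt_nhds hL0] with x hx
    exact (stmt_2_d1 u hu x hx).deriv
  have key : deriv (deriv (fun x : ℝ => (u + 1) * Real.log (u + x) - Real.log x - (u + 1) * Real.log (u + 1))) L
      = 1 / L ^ 2 - (u + 1) / (u + L) ^ 2 := by
    rw [hev.deriv_eq]
    exact (stmt_2_d2 u hu L hL0).deriv
  rw [key, sub_nonpos, div_le_div_iff₀ (by positivity) (by positivity)]
  set s := Real.sqrt (u + 1) with hs
  have hs2 : s ^ 2 = u + 1 := Real.sq_sqrt (by positivity)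
  have hs1 : 1 < s := by
    nlinarith [Real.sqrt_nonneg (u + 1), hs2]
  constructor
  · intro h
    have hP : u + L ≤ s * L := by
      by_contra hc
      push_neg at hc
      have h2 := mul_self_lt_mul_self (by positivity : (0:ℝ) ≤ s * L) hc
      nlinarith
    nlinarith
  · intro h
    have hP : u + L ≤ s * L := by nlinarith
    nlinarith
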